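/- Let G = (V,E) be a finite simple graph and r a positive integer. Define the cognitive radio network I with channel set C = {c_v : v ∈ V}: for each edge e = {u,v} ∈ E an SU U_e with SpecMap(U_e) = {c_u, c_v} and budget 2; an SU M with SpecMap(M) = C and budget r; and the potential graph a star centered at M with leaves {U_e : e ∈ E}. Then G has a vertex cover of size at most r if and only if I is connectable. -/

import Mathlib

/-- A cognitive radio network: secondary users `U`, channels `C`,
spectrum maps, a potential graph, and antenna budgets. -/
structure CRN (U C : Type) where
  SpecMap : U → Finset C
  PG : SimpleGraph U
  budget : U → ℕ

/-- A valid spectrum assignment: each SU opens a subset of its spectrum map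
of size at most its antenna budget. -/
def CRN.ValidSA {U C : Type} [DecidableEq C] (I : CRN U C) (SA : U → Finset C) : Prop :=
  ∀ u, SA u ⊆ I.SpecMap u ∧ (SA u).card ≤ I.budget u

/-- The realization graph under a spectrum assignment: potential edges whose
endpoints share an opened channel. -/
def CRN.RG {U C : Type} [DecidableEq C] (I : CRN U C) (SA : U → Finset C) : SimpleGraph U where
  Adj u v := I.PG.Adj u v ∧ (SA u ∩ SA v).Nonempty
  symm := ⟨fun u v h => ⟨I.PG.adj_symm h.1, by rw [Finset.inter_comm]; exact h.2⟩⟩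
  loopless := ⟨fun u h => I.PG.irrefl h.1⟩

/-- A network is connectable if some valid spectrum assignment makes the
realization graph connected. -/
def CRN.Connectable {U C : Type} [DecidableEq C] (I : CRN U C) : Prop :=
  ∃ SA, I.ValidSA SA ∧ (I.RG SA).Connected

/-- SUs of the vertex-cover reduction: the center M and one SU per edge of G. -/
abbrev V7 {V : Type} [Fintype V] [DecidableEq V] (G : SimpleGraph V) [DecidableRel G.Adj] :=
  Unit ⊕ {e : Sym2 V // e ∈ G.edgeFinset}

/-- The network of the vertex-cover reduction: channels are the vertices of G;
the SU U_e for an edge e = {u,v} has spectrum map {u, v} and budget 2; the SU M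
has spectrum map V and budget r; the potential graph is the star centered at M. -/
def net7 {V : Type} [Fintype V] [DecidableEq V] (G : SimpleGraph V) [DecidableRel G.Adj]
    (r : ℕ) : CRN (V7 G) V where
  SpecMap := fun u =>
    match u with
    | Sum.inl _ => Finset.univ
    | Sum.inr e => {x ∈ Finset.univ | x ∈ e.1}
  PG := SimpleGraph.fromRel (fun u _ => u = Sum.inl ())
  budget := fun u =>
    match u with
    | Sum.inl _ => r
    | Sum.inr _ => 2

/-- G has a vertex cover of size at most r iff the star network of the reduction
is connectable. -/
theorem stmt_7 {V : Type} [Fintype V] [DecidableEq V]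
    (G : SimpleGraph V) [DecidableRel G.Adj] (r : ℕ) (hr : 0 < r) :
    (∃ S : Finset V, S.card ≤ r ∧ ∀ e ∈ G.edgeSet, ∃ v ∈ S, v ∈ e) ↔
      (net7 G r).Connectable := by
  classical
  constructor
  · rintro ⟨S, hcard, hcov⟩
    have hch : ∀ e : {e : Sym2 V // e ∈ G.edgeFinset}, ∃ v ∈ S, v ∈ e.1 := fun e =>
      hcov e.1 (SimpleGraph.mem_edgeFinset.mp e.2)
    set SA0 : V7 G → Finset V := fun u => match u with
      | Sum.inl _ => S
      | Sum.inr e => {(hch e).choose} with hSA0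
    refine ⟨SA0, ?_, ?_⟩
    · intro u
      cases u with
      | inl _ => exact ⟨Finset.subset_univ S, hcard⟩
      | inr e =>
        refine ⟨?_, by simp [SA0, net7]⟩
        intro x hx
        simp only [SA0, Finset.mem_singleton] at hx
        subst hx
        simp [net7, (hch e).choose_spec.2]
    · have hadj : ∀ e : {e : Sym2 V // e ∈ G.edgeFinset},
        ((net7 G r).RG SA0).Adj (Sum.inl ()) (Sum.inr e) := by
        intro e
        refine ⟨?_, ⟨(hch e).choose, ?_⟩⟩
        · simp [net7, SimpleGraph.fromRel_adj]
        · simp [SA0, (hch e).choose_spec.1]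
      have hreach : ∀ w : V7 G, ((net7 G r).RG SA0).Reachable (Sum.inl ()) w := by
        intro w
        cases w with
        | inl u => exact SimpleGraph.Reachable.refl _
        | inr e => exact (hadj e).reachable
      have : Nonempty (V7 G) := ⟨Sum.inl ()⟩
      exact SimpleGraph.Connected.mk fun u v => (hreach u).symm.trans (hreach v)
  · rintro ⟨SA, hval, hconn⟩
    refine ⟨SA (Sum.inl ()), (hval (Sum.inl ())).2, ?_⟩
    intro e he
    have he' : e ∈ G.edgeFinset := SimpleGraph.mem_edgeFinset.mpr he
    obtain ⟨p⟩ := hconn.preconnected (Sum.inr ⟨e, he'⟩) (Sum.inl ())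
    cases p with
    | cons h q =>
      rename_i v
      obtain ⟨hPG, hx⟩ := h
      have hv : v = Sum.inl () := by
        rcases hPG.2 with h1 | h1
        · exact absurd h1 (by simp)
        · exact h1
      subst hv
      obtain ⟨x, hx⟩ := hx
      rw [Finset.mem_inter] at hx
      refine ⟨x, hx.2, ?_⟩
      have := (hval (Sum.inr ⟨e, he'⟩)).1 hx.1
      simpa [net7] using this
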